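/- arXiv:2212.01533 — 11 statements merged into one kernel-verified Lean document; each statement's English description precedes it below -/
import Mathlib

section
/- Let X and Y be nonempty finite sets and let μ and ν be normalized capacities on X and Y respectively. Then the set Π_Ch(μ,ν) of capacities on X × Y with marginals μ and ν is nonempty; that is, there exists a capacity π on X × Y with π(A × Y) = μ(A) for all A ⊆ X and π(X × B) = ν(B) for all B ⊆ Y. -/
open Finset MeasureTheory

/-- A capacity on a finite set `Z`: a monotone set function vanishing on `∅`. -/
def IsCapacity {Z : Type*} (γ : Finset Z → ℝ) : Prop :=
  γ ∅ = 0 ∧ ∀ A B : Finset Z, A ⊆ B → γ A ≤ γ B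

/-- A normalized capacity: a capacity with `γ(Z) = 1`. -/
def IsNormalizedCapacity {Z : Type*} [Fintype Z] (γ : Finset Z → ℝ) : Prop :=
  IsCapacity γ ∧ γ Finset.univ = 1

/-- Membership of a capacity `π` on `X × Y` in `Π_Ch(μ, ν)`:
`π` is a capacity whose marginals are `μ` and `ν`. -/
def InPiCh {X Y : Type*} [Fintype X] [Fintype Y]
    (μ : Finset X → ℝ) (ν : Finset Y → ℝ) (π : Finset (X × Y) → ℝ) : Prop :=
  IsCapacity π ∧ (∀ A : Finset X, π (A ×ˢ Finset.univ) = μ A) ∧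
    (∀ B : Finset Y, π (Finset.univ ×ˢ B) = ν B)

/-- For nonempty finite `X`, `Y` and normalized capacities `μ`, `ν`,
the set `Π_Ch(μ, ν)` is nonempty. -/
theorem piCh_nonempty {X Y : Type*} [Fintype X] [Fintype Y] [Nonempty X] [Nonempty Y]
    (μ : Finset X → ℝ) (ν : Finset Y → ℝ)
    (hμ : IsNormalizedCapacity μ) (hν : IsNormalizedCapacity ν) :
    ∃ π : Finset (X × Y) → ℝ, InPiCh μ ν π := by
  classical
  obtain ⟨⟨hμ0, hμmono⟩, hμ1⟩ := hμ
  obtain ⟨⟨hν0, hνmono⟩, hν1⟩ := hν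
  have hμ01 : ∀ A : Finset X, 0 ≤ μ A ∧ μ A ≤ 1 := fun A =>
    ⟨hμ0 ▸ hμmono ∅ A (empty_subset A), hμ1 ▸ hμmono A univ (subset_univ A)⟩
  have hν01 : ∀ B : Finset Y, 0 ≤ ν B ∧ ν B ≤ 1 := fun B =>
    ⟨hν0 ▸ hνmono ∅ B (empty_subset B), hν1 ▸ hνmono B univ (subset_univ B)⟩
  set R : Finset (X × Y) → Finset X :=
    fun S => univ.filter (fun x => ∀ y : Y, (x, y) ∈ S) with hR
  set C : Finset (X × Y) → Finset Y :=
    fun S => univ.filter (fun y => ∀ x : X, (x, y) ∈ S) with hC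
  refine ⟨fun S => μ (R S) + ν (C S) - μ (R S) * ν (C S), ⟨?_, ?_⟩, ?_, ?_⟩
  · -- vanishes on ∅
    have hRe : R ∅ = ∅ := by
      simp only [hR, filter_eq_empty_iff]
      intro x _
      obtain ⟨y⟩ := ‹Nonempty Y›
      exact fun h => by simpa using h y
    have hCe : C ∅ = ∅ := by
      simp only [hC, filter_eq_empty_iff]
      intro y _
      obtain ⟨x⟩ := ‹Nonempty X›
      exact fun h => by simpa using h x
    show μ (R ∅) + ν (C ∅) - μ (R ∅) * ν (C ∅) = 0
    rw [hRe, hCe, hμ0, hν0]; ring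
  · -- monotone
    intro S T hST
    have hRsub : R S ⊆ R T := by
      intro x hx
      simp only [hR, mem_filter, mem_univ, true_and] at hx ⊢
      exact fun y => hST (hx y)
    have hCsub : C S ⊆ C T := by
      intro y hy
      simp only [hC, mem_filter, mem_univ, true_and] at hy ⊢
      exact fun x => hST (hy x)
    have ha := hμmono _ _ hRsub
    have hb := hνmono _ _ hCsub
    obtain ⟨ha0, ha1⟩ := hμ01 (R S)
    obtain ⟨ha0', ha1'⟩ := hμ01 (R T)
    obtain ⟨hb0, hb1⟩ := hν01 (C S)
    obtain ⟨hb0', hb1'⟩ := hν01 (C T)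
    show μ (R S) + ν (C S) - μ (R S) * ν (C S) ≤ μ (R T) + ν (C T) - μ (R T) * ν (C T)
    nlinarith [mul_nonneg (sub_nonneg.2 ha) (sub_nonneg.2 hb1'),
      mul_nonneg (sub_nonneg.2 hb) (sub_nonneg.2 ha1)]
  · -- first marginal
    intro A
    have hRA : R (A ×ˢ univ) = A := by
      ext x
      simp only [hR, mem_filter, mem_univ, true_and, Finset.mem_product, and_true]
      obtain ⟨y⟩ := ‹Nonempty Y›
      exact ⟨fun h => h y, fun h _ => h⟩
    by_cases hA : A = univ
    · have hCA : C (A ×ˢ univ) = univ := by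
        subst hA
        ext y
        simp [hC]
      show μ (R (A ×ˢ univ)) + ν (C (A ×ˢ univ)) - μ (R (A ×ˢ univ)) * ν (C (A ×ˢ univ)) = μ A
      rw [hRA, hCA, hA, hμ1, hν1]; ring
    · have hCA : C (A ×ˢ univ) = ∅ := by
        simp only [hC, filter_eq_empty_iff]
        intro y _ h
        exact hA (eq_univ_iff_forall.2 fun x => by simpa using (Finset.mem_product.1 (h x)).1)
      show μ (R (A ×ˢ univ)) + ν (C (A ×ˢ univ)) - μ (R (A ×ˢ univ)) * ν (C (A ×ˢ univ)) = μ A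
      rw [hRA, hCA, hν0]; ring
  · -- second marginal
    intro B
    have hCB : C (univ ×ˢ B) = B := by
      ext y
      simp only [hC, mem_filter, mem_univ, true_and, Finset.mem_product]
      obtain ⟨x⟩ := ‹Nonempty X›
      exact ⟨fun h => h x, fun h _ => h⟩
    by_cases hB : B = univ
    · have hRB : R (univ ×ˢ B) = univ := by
        subst hB
        ext x
        simp [hR]
      show μ (R (univ ×ˢ B)) + ν (C (univ ×ˢ B)) - μ (R (univ ×ˢ B)) * ν (C (univ ×ˢ B)) = ν B
      rw [hRB, hCB, hB, hμ1, hν1]; ring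
    · have hRB : R (univ ×ˢ B) = ∅ := by
        simp only [hR, filter_eq_empty_iff]
        intro x _ h
        exact hB (eq_univ_iff_forall.2 fun y => by simpa using (Finset.mem_product.1 (h y)).2)
      show μ (R (univ ×ˢ B)) + ν (C (univ ×ˢ B)) - μ (R (univ ×ˢ B)) * ν (C (univ ×ˢ B)) = ν B
      rw [hRB, hCB, hμ0]; ring
end

section
/- Let X and Y be nonempty finite sets and let μ and ν be normalized capacities on X and Y respectively. Then the following are equivalent: (1) both C(μ) and C(ν) are nonempty; (2) there exists π ∈ Π_Ch(μ,ν) with C(π) nonempty. -/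
open Finset MeasureTheory

/-- Membership in the core of a capacity `γ`: a weight function `w`, identified with the
additive set function `A ↦ ∑ z ∈ A, w z`, dominating `γ` setwise and agreeing at `Z`. -/
def InCore {Z : Type*} [Fintype Z] (γ : Finset Z → ℝ) (w : Z → ℝ) : Prop :=
  (∀ A : Finset Z, γ A ≤ ∑ z ∈ A, w z) ∧ (∑ z : Z, w z) = γ Finset.univ

/-- `C(μ)` and `C(ν)` are both nonempty if and only if there exists
`π ∈ Π_Ch(μ, ν)` with nonempty core. -/
theorem piCh_core_nonempty_iff {X Y : Type*} [Fintype X] [Fintype Y] [Nonempty X] [Nonempty Y]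
    (μ : Finset X → ℝ) (ν : Finset Y → ℝ)
    (hμ : IsNormalizedCapacity μ) (hν : IsNormalizedCapacity ν) :
    ((∃ u : X → ℝ, InCore μ u) ∧ (∃ v : Y → ℝ, InCore ν v)) ↔
      (∃ π : Finset (X × Y) → ℝ, InPiCh μ ν π ∧ ∃ w : X × Y → ℝ, InCore π w) := by
  classical
  obtain ⟨⟨hμ0, hμmono⟩, hμ1⟩ := hμ
  obtain ⟨⟨hν0, hνmono⟩, hν1⟩ := hν
  have hμnn : ∀ A, 0 ≤ μ A := fun A => hμ0 ▸ hμmono ∅ A (Finset.empty_subset A)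
  have hνnn : ∀ B, 0 ≤ ν B := fun B => hν0 ▸ hνmono ∅ B (Finset.empty_subset B)
  have hμle1 : ∀ A, μ A ≤ 1 := fun A => hμ1 ▸ hμmono A Finset.univ (Finset.subset_univ A)
  have hνle1 : ∀ B, ν B ≤ 1 := fun B => hν1 ▸ hνmono B Finset.univ (Finset.subset_univ B)
  constructor
  · rintro ⟨⟨u, hu, husum⟩, ⟨v, hv, hvsum⟩⟩
    have hunn : ∀ x, 0 ≤ u x := fun x => le_trans (hμnn {x}) (by simpa using hu {x})
    have hvnn : ∀ y, 0 ≤ v y := fun y => le_trans (hνnn {y}) (by simpa using hv {y})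
    set AS : Finset (X × Y) → Finset X :=
      fun S => Finset.univ.filter (fun x => ∀ y, (x, y) ∈ S) with hAS
    set BS : Finset (X × Y) → Finset Y :=
      fun S => Finset.univ.filter (fun y => ∀ x, (x, y) ∈ S) with hBS
    have hAmem : ∀ S x, x ∈ AS S ↔ ∀ y, (x, y) ∈ S := by
      intro S x; simp [hAS]
    have hBmem : ∀ S y, y ∈ BS S ↔ ∀ x, (x, y) ∈ S := by
      intro S y; simp [hBS]
    -- rectangle sum
    have hrect : ∀ (A : Finset X), (∑ p ∈ A ×ˢ (Finset.univ : Finset Y), u p.1 * v p.2)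
        = ∑ x ∈ A, u x := by
      intro A
      rw [Finset.sum_product]
      refine Finset.sum_congr rfl fun x _ => ?_
      simp [← Finset.mul_sum, hvsum, hν1]
    have hrect' : ∀ (B : Finset Y), (∑ p ∈ (Finset.univ : Finset X) ×ˢ B, u p.1 * v p.2)
        = ∑ y ∈ B, v y := by
      intro B
      rw [Finset.sum_product]
      have h : ∀ x ∈ (Finset.univ : Finset X), (∑ y ∈ B, u (x, y).1 * v (x, y).2)
          = u x * ∑ y ∈ B, v y := by
        intro x _; simp [Finset.mul_sum]
      rw [Finset.sum_congr rfl h, ← Finset.sum_mul]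
      simp [husum, hμ1]
    -- domination of μ (AS S) and ν (BS S) by sums over S
    have hdomμ : ∀ S : Finset (X × Y), μ (AS S) ≤ ∑ p ∈ S, u p.1 * v p.2 := by
      intro S
      have hsub : AS S ×ˢ (Finset.univ : Finset Y) ⊆ S := by
        intro p hp
        rw [Finset.mem_product] at hp
        exact ((hAmem S p.1).1 hp.1 p.2)
      calc μ (AS S) ≤ ∑ x ∈ AS S, u x := hu (AS S)
        _ = ∑ p ∈ AS S ×ˢ (Finset.univ : Finset Y), u p.1 * v p.2 := (hrect _).symm
        _ ≤ ∑ p ∈ S, u p.1 * v p.2 := by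
            refine Finset.sum_le_sum_of_subset_of_nonneg hsub fun p _ _ =>
              mul_nonneg (hunn _) (hvnn _)
    have hdomν : ∀ S : Finset (X × Y), ν (BS S) ≤ ∑ p ∈ S, u p.1 * v p.2 := by
      intro S
      have hsub : (Finset.univ : Finset X) ×ˢ BS S ⊆ S := by
        intro p hp
        rw [Finset.mem_product] at hp
        exact ((hBmem S p.2).1 hp.2 p.1)
      calc ν (BS S) ≤ ∑ y ∈ BS S, v y := hv (BS S)
        _ = ∑ p ∈ (Finset.univ : Finset X) ×ˢ BS S, u p.1 * v p.2 := (hrect' _).symm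
        _ ≤ ∑ p ∈ S, u p.1 * v p.2 := by
            refine Finset.sum_le_sum_of_subset_of_nonneg hsub fun p _ _ =>
              mul_nonneg (hunn _) (hvnn _)
    refine ⟨fun S => max (μ (AS S)) (ν (BS S)), ⟨⟨?_, ?_⟩, ?_, ?_⟩,
      fun p => u p.1 * v p.2, fun S => ?_, ?_⟩
    · -- vanishing at ∅
      have h1 : AS ∅ = ∅ := by
        ext x
        rw [hAmem]
        simp
      have h2 : BS ∅ = ∅ := by
        ext y
        rw [hBmem]
        simp
      simp only [h1, h2, hμ0, hν0, max_self]
    · -- monotone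
      intro S T hST
      have h1 : AS S ⊆ AS T := fun x hx =>
        (hAmem T x).2 fun y => hST ((hAmem S x).1 hx y)
      have h2 : BS S ⊆ BS T := fun y hy =>
        (hBmem T y).2 fun x => hST ((hBmem S y).1 hy x)
      exact max_le_max (hμmono _ _ h1) (hνmono _ _ h2)
    · -- marginal on X
      intro A
      have h1 : AS (A ×ˢ Finset.univ) = A := by
        ext x
        rw [hAmem]
        constructor
        · intro h
          have := h (Classical.arbitrary Y)
          rw [Finset.mem_product] at this
          exact this.1
        · intro hx y; rw [Finset.mem_product]; exact ⟨hx, Finset.mem_univ y⟩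
      show max (μ (AS (A ×ˢ Finset.univ))) (ν (BS (A ×ˢ Finset.univ))) = μ A
      rw [h1]
      refine max_eq_left ?_
      rcases (BS (A ×ˢ Finset.univ)).eq_empty_or_nonempty with h | ⟨y, hy⟩
      · rw [h, hν0]; exact hμnn A
      · have hAuniv : A = Finset.univ := by
          ext x
          simp only [Finset.mem_univ, iff_true]
          have := (hBmem _ y).1 hy x
          rw [Finset.mem_product] at this
          exact this.1
        rw [hAuniv, hμ1]
        exact hνle1 _
    · -- marginal on Y
      intro B
      have h1 : BS (Finset.univ ×ˢ B) = B := by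
        ext y
        rw [hBmem]
        constructor
        · intro h
          have := h (Classical.arbitrary X)
          rw [Finset.mem_product] at this
          exact this.2
        · intro hy x; rw [Finset.mem_product]; exact ⟨Finset.mem_univ x, hy⟩
      show max (μ (AS (Finset.univ ×ˢ B))) (ν (BS (Finset.univ ×ˢ B))) = ν B
      rw [h1]
      refine max_eq_right ?_
      rcases (AS (Finset.univ ×ˢ B)).eq_empty_or_nonempty with h | ⟨x, hx⟩
      · rw [h, hμ0]; exact hνnn B
      · have hBuniv : B = Finset.univ := by
          ext y
          simp only [Finset.mem_univ, iff_true]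
          have := (hAmem _ x).1 hx y
          rw [Finset.mem_product] at this
          exact this.2
        rw [hBuniv, hν1]
        exact hμle1 _
    · -- core domination
      exact max_le (hdomμ S) (hdomν S)
    · -- total mass
      have h1 : AS Finset.univ = Finset.univ := by
        ext x; simp [hAmem]
      have h2 : BS Finset.univ = Finset.univ := by
        ext y; simp [hBmem]
      have h3 : (∑ p : X × Y, u p.1 * v p.2)
          = ∑ p ∈ (Finset.univ : Finset X) ×ˢ (Finset.univ : Finset Y), u p.1 * v p.2 := by
        rw [Finset.univ_product_univ]
      show (∑ p : X × Y, u p.1 * v p.2)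
          = max (μ (AS Finset.univ)) (ν (BS Finset.univ))
      rw [h3, hrect Finset.univ, husum, hμ1, h1, h2, hμ1, hν1, max_self]
  · rintro ⟨π, ⟨⟨hπ0, hπmono⟩, hπX, hπY⟩, w, hw, hwsum⟩
    have hπuniv : π Finset.univ = 1 := by
      rw [← Finset.univ_product_univ, hπX, hμ1]
    refine ⟨⟨fun x => ∑ y, w (x, y), fun A => ?_, ?_⟩,
      ⟨fun y => ∑ x, w (x, y), fun B => ?_, ?_⟩⟩
    · have := hw (A ×ˢ Finset.univ)
      rw [hπX] at this
      rw [Finset.sum_product] at this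
      exact this
    · rw [← Fintype.sum_prod_type, hwsum, hπuniv, hμ1]
    · have := hw (Finset.univ ×ˢ B)
      rw [hπY] at this
      rw [Finset.sum_product] at this
      calc ν B ≤ ∑ x : X, ∑ y ∈ B, w (x, y) := this
        _ = ∑ y ∈ B, ∑ x : X, w (x, y) := Finset.sum_comm
    · rw [Finset.sum_comm, ← Fintype.sum_prod_type, hwsum, hπuniv, hν1]
end

section
/- Let X and Y be nonempty finite sets and let μ and ν be normalized capacities on X and Y respectively. The set function π^* on subsets of X × Y defined by π^*(N) = min(μ(N_X), ν(N_Y)) is a normalized capacity on X × Y and belongs to Π_Ch(μ,ν). -/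
open Finset MeasureTheory

/-- Projection of `N ⊆ X × Y` onto `X`. -/
def projX {X Y : Type*} [DecidableEq X] (N : Finset (X × Y)) : Finset X :=
  N.image Prod.fst

/-- Projection of `N ⊆ X × Y` onto `Y`. -/
def projY {X Y : Type*} [DecidableEq Y] (N : Finset (X × Y)) : Finset Y :=
  N.image Prod.snd

/-- Full-fiber projection of `N ⊆ X × Y` onto `X`: points `x` with `(x, y) ∈ N` for all `y`. -/
def tprojX {X Y : Type*} [Fintype X] [Fintype Y] [DecidableEq X] [DecidableEq Y]
    (N : Finset (X × Y)) : Finset X :=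
  Finset.univ.filter (fun x => ∀ y : Y, (x, y) ∈ N)

/-- Full-fiber projection of `N ⊆ X × Y` onto `Y`: points `y` with `(x, y) ∈ N` for all `x`. -/
def tprojY {X Y : Type*} [Fintype X] [Fintype Y] [DecidableEq X] [DecidableEq Y]
    (N : Finset (X × Y)) : Finset Y :=
  Finset.univ.filter (fun y => ∀ x : X, (x, y) ∈ N)

/-- `π^*(N) = min(μ(N_X), ν(N_Y))` is a normalized capacity on `X × Y`
belonging to `Π_Ch(μ, ν)`. -/
theorem piUpper_mem_piCh {X Y : Type*} [Fintype X] [Fintype Y] [Nonempty X] [Nonempty Y]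
    [DecidableEq X] [DecidableEq Y]
    (μ : Finset X → ℝ) (ν : Finset Y → ℝ)
    (hμ : IsNormalizedCapacity μ) (hν : IsNormalizedCapacity ν) :
    IsNormalizedCapacity (fun N : Finset (X × Y) => min (μ (projX N)) (ν (projY N))) ∧
      InPiCh μ ν (fun N : Finset (X × Y) => min (μ (projX N)) (ν (projY N))) := by
  obtain ⟨⟨hμ0, hμmono⟩, hμ1⟩ := hμ
  obtain ⟨⟨hν0, hνmono⟩, hν1⟩ := hν
  have hzero : min (μ (projX (∅ : Finset (X × Y)))) (ν (projY (∅ : Finset (X × Y)))) = 0 := by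
    simp [projX, projY, hμ0, hν0]
  have hmono : ∀ A B : Finset (X × Y), A ⊆ B →
      min (μ (projX A)) (ν (projY A)) ≤ min (μ (projX B)) (ν (projY B)) := by
    intro A B hAB
    exact min_le_min (hμmono _ _ (Finset.image_subset_image hAB))
      (hνmono _ _ (Finset.image_subset_image hAB))
  have hcap : IsCapacity (fun N : Finset (X × Y) => min (μ (projX N)) (ν (projY N))) :=
    ⟨hzero, hmono⟩
  have huniv : min (μ (projX (Finset.univ : Finset (X × Y))))
      (ν (projY (Finset.univ : Finset (X × Y)))) = 1 := by
    have hx : projX (Finset.univ : Finset (X × Y)) = Finset.univ := by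
      ext x; simp [projX]
    have hy : projY (Finset.univ : Finset (X × Y)) = Finset.univ := by
      ext y; simp [projY]
    rw [hx, hy, hμ1, hν1]; simp
  refine ⟨⟨hcap, huniv⟩, hcap, ?_, ?_⟩
  · intro A
    rcases eq_or_ne A ∅ with rfl | hA
    · simp [projX, projY, hμ0, hν0]
    · have hAne : A.Nonempty := Finset.nonempty_iff_ne_empty.mpr hA
      have hx : projX (A ×ˢ (Finset.univ : Finset Y)) = A := by
        ext x; simp [projX]
      have hy : projY (A ×ˢ (Finset.univ : Finset Y)) = Finset.univ := by
        ext y; simp [projY]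
        obtain ⟨a, ha⟩ := hAne; exact ⟨a, ha⟩
      show μ (projX (A ×ˢ Finset.univ)) ⊓ ν (projY (A ×ˢ Finset.univ)) = μ A
      rw [hx, hy, hν1]
      have : μ A ≤ 1 := hμ1 ▸ hμmono A Finset.univ (Finset.subset_univ A)
      exact min_eq_left this
  · intro B
    rcases eq_or_ne B ∅ with rfl | hB
    · simp [projX, projY, hμ0, hν0]
    · have hBne : B.Nonempty := Finset.nonempty_iff_ne_empty.mpr hB
      have hy : projY ((Finset.univ : Finset X) ×ˢ B) = B := by
        ext y; simp [projY]
      have hx : projX ((Finset.univ : Finset X) ×ˢ B) = Finset.univ := by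
        ext x; simp [projX]
        obtain ⟨b, hb⟩ := hBne; exact ⟨b, hb⟩
      show μ (projX (Finset.univ ×ˢ B)) ⊓ ν (projY (Finset.univ ×ˢ B)) = ν B
      rw [hx, hy, hμ1]
      have : ν B ≤ 1 := hν1 ▸ hνmono B Finset.univ (Finset.subset_univ B)
      exact min_eq_right this
end

section
/- Let X and Y be nonempty finite sets and let μ and ν be normalized capacities on X and Y respectively. The set function π_* on subsets of X × Y defined by π_*(N) = max(μ(Ñ_X), ν(Ñ_Y)) is a normalized capacity on X × Y and belongs to Π_Ch(μ,ν). -/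
open Finset MeasureTheory

/-- `π_*(N) = max(μ(Ñ_X), ν(Ñ_Y))` is a normalized capacity on `X × Y`
belonging to `Π_Ch(μ, ν)`. -/
theorem piLower_mem_piCh {X Y : Type*} [Fintype X] [Fintype Y] [Nonempty X] [Nonempty Y]
    [DecidableEq X] [DecidableEq Y]
    (μ : Finset X → ℝ) (ν : Finset Y → ℝ)
    (hμ : IsNormalizedCapacity μ) (hν : IsNormalizedCapacity ν) :
    IsNormalizedCapacity (fun N : Finset (X × Y) => max (μ (tprojX N)) (ν (tprojY N))) ∧
      InPiCh μ ν (fun N : Finset (X × Y) => max (μ (tprojX N)) (ν (tprojY N))) := by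
  obtain ⟨⟨hμ0, hμmono⟩, hμ1⟩ := hμ
  obtain ⟨⟨hν0, hνmono⟩, hν1⟩ := hν
  have hμnn : ∀ A, 0 ≤ μ A := fun A => hμ0 ▸ hμmono ∅ A (Finset.empty_subset A)
  have hνnn : ∀ B, 0 ≤ ν B := fun B => hν0 ▸ hνmono ∅ B (Finset.empty_subset B)
  have hX : tprojX (∅ : Finset (X × Y)) = ∅ := by
    ext x; simp [tprojX]
  have hY : tprojY (∅ : Finset (X × Y)) = ∅ := by
    ext y; simp [tprojY]
  have hcap : IsCapacity (fun N : Finset (X × Y) => max (μ (tprojX N)) (ν (tprojY N))) := by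
    constructor
    · simp [hX, hY, hμ0, hν0]
    · intro A B hAB
      have h1 : tprojX A ⊆ tprojX B := by
        intro x hx; simp only [tprojX, Finset.mem_filter, Finset.mem_univ, true_and] at *
        exact fun y => hAB (hx y)
      have h2 : tprojY A ⊆ tprojY B := by
        intro y hy; simp only [tprojY, Finset.mem_filter, Finset.mem_univ, true_and] at *
        exact fun x => hAB (hy x)
      exact max_le_max (hμmono _ _ h1) (hνmono _ _ h2)
  have hXA : ∀ A : Finset X, tprojX (A ×ˢ (Finset.univ : Finset Y)) = A := by
    intro A; ext x; simp [tprojX]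
  have hYB : ∀ B : Finset Y, tprojY ((Finset.univ : Finset X) ×ˢ B) = B := by
    intro B; ext y; simp [tprojY]
  have hmargX : ∀ A : Finset X, max (μ (tprojX (A ×ˢ (Finset.univ : Finset Y))))
      (ν (tprojY (A ×ˢ (Finset.univ : Finset Y)))) = μ A := by
    intro A
    rw [hXA]
    by_cases hA : A = Finset.univ
    · subst hA
      have : tprojY ((Finset.univ : Finset X) ×ˢ (Finset.univ : Finset Y)) = Finset.univ := by
        ext y; simp [tprojY]
      rw [this, hμ1, hν1]; simp
    · have : tprojY (A ×ˢ (Finset.univ : Finset Y)) = ∅ := by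
        ext y; simp only [tprojY, Finset.mem_filter, Finset.mem_univ, true_and,
          Finset.mem_product, Finset.notMem_empty, iff_false]
        intro h
        exact hA (Finset.eq_univ_iff_forall.2 fun x => (h x).1)
      rw [this, hν0]
      exact max_eq_left (hμnn A)
  have hmargY : ∀ B : Finset Y, max (μ (tprojX ((Finset.univ : Finset X) ×ˢ B)))
      (ν (tprojY ((Finset.univ : Finset X) ×ˢ B))) = ν B := by
    intro B
    rw [hYB]
    by_cases hB : B = Finset.univ
    · subst hB
      have : tprojX ((Finset.univ : Finset X) ×ˢ (Finset.univ : Finset Y)) = Finset.univ := by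
        ext x; simp [tprojX]
      rw [this, hμ1, hν1]; simp
    · have : tprojX ((Finset.univ : Finset X) ×ˢ B) = ∅ := by
        ext x; simp only [tprojX, Finset.mem_filter, Finset.mem_univ, true_and,
          Finset.mem_product, Finset.notMem_empty, iff_false]
        intro h
        exact hB (Finset.eq_univ_iff_forall.2 fun y => h y)
      rw [this, hμ0]
      exact max_eq_right (hνnn B)
  refine ⟨⟨hcap, ?_⟩, hcap, hmargX, hmargY⟩
  have hU : tprojX (Finset.univ : Finset (X × Y)) = Finset.univ := by
    ext x; simp [tprojX]
  have hV : tprojY (Finset.univ : Finset (X × Y)) = Finset.univ := by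
    ext y; simp [tprojY]
  simp [hU, hV, hμ1, hν1]
end

section
/- Let X and Y be nonempty finite sets and let μ and ν be normalized capacities on X and Y respectively. Then for every π ∈ Π_Ch(μ,ν) and every N ⊆ X × Y, max(μ(Ñ_X), ν(Ñ_Y)) ≤ π(N) ≤ min(μ(N_X), ν(N_Y)); that is, π_*(N) = max(μ(Ñ_X), ν(Ñ_Y)) is the pointwise infimum and π^*(N) = min(μ(N_X), ν(N_Y)) is the pointwise supremum of π(N) over π ∈ Π_Ch(μ,ν). -/
open Finset MeasureTheory

/-- every `π ∈ Π_Ch(μ, ν)` satisfies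
`max(μ(Ñ_X), ν(Ñ_Y)) ≤ π(N) ≤ min(μ(N_X), ν(N_Y))` for every `N ⊆ X × Y`;
so `π_*` is the pointwise infimum and `π^*` the pointwise supremum over `Π_Ch(μ, ν)`. -/
theorem piCh_pointwise_bounds {X Y : Type*} [Fintype X] [Fintype Y] [Nonempty X] [Nonempty Y]
    [DecidableEq X] [DecidableEq Y]
    (μ : Finset X → ℝ) (ν : Finset Y → ℝ)
    (hμ : IsNormalizedCapacity μ) (hν : IsNormalizedCapacity ν)
    (π : Finset (X × Y) → ℝ) (hπ : InPiCh μ ν π) (N : Finset (X × Y)) :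
    max (μ (tprojX N)) (ν (tprojY N)) ≤ π N ∧ π N ≤ min (μ (projX N)) (ν (projY N)) := by
  obtain ⟨⟨_, mono⟩, hA, hB⟩ := hπ
  have h1 : tprojX N ×ˢ (Finset.univ : Finset Y) ⊆ N := by
    intro p hp
    simp only [Finset.mem_product, tprojX, Finset.mem_filter] at hp
    exact hp.1.2 p.2
  have h2 : (Finset.univ : Finset X) ×ˢ tprojY N ⊆ N := by
    intro p hp
    simp only [Finset.mem_product, tprojY, Finset.mem_filter] at hp
    exact hp.2.2 p.1
  have h3 : N ⊆ projX N ×ˢ (Finset.univ : Finset Y) := by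
    intro p hp
    simp only [Finset.mem_product, projX, Finset.mem_image]
    exact ⟨⟨p, hp, rfl⟩, Finset.mem_univ _⟩
  have h4 : N ⊆ (Finset.univ : Finset X) ×ˢ projY N := by
    intro p hp
    simp only [Finset.mem_product, projY, Finset.mem_image]
    exact ⟨Finset.mem_univ _, ⟨p, hp, rfl⟩⟩
  refine ⟨max_le ?_ ?_, le_min ?_ ?_⟩
  · rw [← hA]; exact mono _ _ h1
  · rw [← hB]; exact mono _ _ h2
  · rw [← hA]; exact mono _ _ h3
  · rw [← hB]; exact mono _ _ h4
end

section
/- Let X and Y be nonempty finite sets, let μ and ν be normalized capacities on X and Y respectively, and let f : X × Y → ℝ. Then for every π ∈ Π_Ch(μ,ν), the Choquet integral of f with respect to π_* is less than or equal to the Choquet integral of f with respect to π, where π_*(N) = max(μ(Ñ_X), ν(Ñ_Y)). In particular, the minimum of the Choquet integral of f over Π_Ch(μ,ν) is attained at π_*. -/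
open Finset MeasureTheory

/-- The Choquet integral of `f` with respect to a (normalized) capacity `γ` on a finite set. -/
noncomputable def choquet {Z : Type*} [Fintype Z] (γ : Finset Z → ℝ) (f : Z → ℝ) : ℝ :=
  (∫ t in Set.Ioi (0 : ℝ), γ (Finset.univ.filter (fun z => t ≤ f z))) +
    ∫ t in Set.Iio (0 : ℝ), (γ (Finset.univ.filter (fun z => t ≤ f z)) - 1)


set_option linter.unusedSectionVars false

section
variable {Z : Type*} [Fintype Z] [Nonempty Z] {γ : Finset Z → ℝ}

lemma cap_anti (h : IsNormalizedCapacity γ) (f : Z → ℝ) : Antitone (fun t : ℝ => γ (Finset.univ.filter (fun z => t ≤ f z))) := by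
  intro t s hts
  apply h.1.2
  intro z hz
  simp only [Finset.mem_filter] at *
  exact ⟨hz.1, le_trans hts hz.2⟩

lemma cap_integrable_pos (h : IsNormalizedCapacity γ) (f : Z → ℝ) :
    IntegrableOn (fun t : ℝ => γ (Finset.univ.filter (fun z => t ≤ f z))) (Set.Ioi 0) := by
  set g := fun t : ℝ => γ (Finset.univ.filter (fun z => t ≤ f z)) with hg
  set M : ℝ := max (Finset.univ.sup' Finset.univ_nonempty f) 0 with hM
  have hmble : Measurable g := (cap_anti h f).measurable
  have h1 : IntegrableOn g (Set.Ioc 0 M) := by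
    apply Measure.integrableOn_of_bounded (M := max (|γ ∅|) (|γ Finset.univ|))
    · exact measure_Ioc_lt_top.ne
    · exact hmble.aestronglyMeasurable
    · filter_upwards with t
      have hnn : 0 ≤ g t := h.1.1 ▸ h.1.2 ∅ _ (Finset.empty_subset _)
      rw [Real.norm_eq_abs, abs_of_nonneg hnn]
      calc g t ≤ γ Finset.univ := h.1.2 _ _ (Finset.filter_subset _ _)
        _ ≤ |γ Finset.univ| := le_abs_self _
        _ ≤ _ := le_max_right _ _
  have h2 : IntegrableOn g (Set.Ioi M) := by
    have : Set.EqOn g 0 (Set.Ioi M) := by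
      intro t ht
      have : Finset.univ.filter (fun z => t ≤ f z) = ∅ := by
        apply Finset.filter_false_of_mem
        intro z _ hle
        have : f z ≤ M := le_trans (Finset.le_sup' f (Finset.mem_univ z)) (le_max_left _ _)
        exact absurd (le_trans hle this) (not_le.2 ht)
      simp only [g, this, h.1.1, Pi.zero_apply]
    exact (integrableOn_congr_fun this measurableSet_Ioi).2 (integrableOn_zero)
  have := h1.union h2
  rwa [Set.Ioc_union_Ioi_eq_Ioi (le_max_right _ _)] at this

lemma cap_integrable_neg (h : IsNormalizedCapacity γ) (f : Z → ℝ) :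
    IntegrableOn (fun t : ℝ => γ (Finset.univ.filter (fun z => t ≤ f z)) - 1) (Set.Iio 0) := by
  set g := fun t : ℝ => γ (Finset.univ.filter (fun z => t ≤ f z)) - 1 with hg
  set m : ℝ := min (Finset.univ.inf' Finset.univ_nonempty f) 0 with hm
  have hmble : Measurable g := ((cap_anti h f).measurable).sub measurable_const
  have h1 : IntegrableOn g (Set.Iio m) := by
    have : Set.EqOn g 0 (Set.Iio m) := by
      intro t ht
      have : Finset.univ.filter (fun z => t ≤ f z) = Finset.univ := by
        apply Finset.filter_true_of_mem
        intro z _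
        have : m ≤ f z := le_trans (min_le_left _ _) (Finset.inf'_le f (Finset.mem_univ z))
        exact le_trans (le_of_lt ht) this
      simp only [g, this, h.2, Pi.zero_apply, sub_self]
    exact (integrableOn_congr_fun this measurableSet_Iio).2 (integrableOn_zero)
  have h2 : IntegrableOn g (Set.Ico m 0) := by
    apply Measure.integrableOn_of_bounded (M := max (|γ ∅ - 1|) (|γ Finset.univ - 1|))
    · exact measure_Ico_lt_top.ne
    · exact hmble.aestronglyMeasurable
    · filter_upwards with t
      rcases le_or_gt 0 (g t) with h0 | h0
      · rw [Real.norm_eq_abs, abs_of_nonneg h0]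
        have := h.1.2 (Finset.univ.filter (fun z => t ≤ f z)) _ (Finset.filter_subset _ _)
        calc g t ≤ γ Finset.univ - 1 := by simp only [g]; linarith
          _ ≤ |γ Finset.univ - 1| := le_abs_self _
          _ ≤ _ := le_max_right _ _
      · rw [Real.norm_eq_abs, abs_of_neg h0]
        have := h.1.2 ∅ (Finset.univ.filter (fun z => t ≤ f z)) (Finset.empty_subset _)
        calc -g t ≤ -(γ ∅ - 1) := by simp only [g]; linarith
          _ ≤ |γ ∅ - 1| := neg_le_abs _
          _ ≤ _ := le_max_left _ _
  have := h1.union h2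
  rwa [Set.Iio_union_Ico_eq_Iio (min_le_right _ _)] at this

end

lemma choquet_mono {Z : Type*} [Fintype Z] [Nonempty Z] {γ₁ γ₂ : Finset Z → ℝ}
    (h₁ : IsNormalizedCapacity γ₁) (h₂ : IsNormalizedCapacity γ₂)
    (hle : ∀ N, γ₁ N ≤ γ₂ N) (f : Z → ℝ) : choquet γ₁ f ≤ choquet γ₂ f := by
  unfold choquet
  apply add_le_add
  · exact setIntegral_mono_on (cap_integrable_pos h₁ f) (cap_integrable_pos h₂ f)
      measurableSet_Ioi (fun t _ => hle _)
  · exact setIntegral_mono_on (cap_integrable_neg h₁ f) (cap_integrable_neg h₂ f)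
      measurableSet_Iio (fun t _ => sub_le_sub_right (hle _) 1)

/-- main -/
theorem choquet_min_at_piLower {X Y : Type*} [Fintype X] [Fintype Y] [Nonempty X] [Nonempty Y]
    [DecidableEq X] [DecidableEq Y]
    (μ : Finset X → ℝ) (ν : Finset Y → ℝ)
    (hμ : IsNormalizedCapacity μ) (hν : IsNormalizedCapacity ν) (f : X × Y → ℝ) :
    InPiCh μ ν (fun N : Finset (X × Y) => max (μ (tprojX N)) (ν (tprojY N))) ∧
      ∀ π : Finset (X × Y) → ℝ, InPiCh μ ν π →
        choquet (fun N : Finset (X × Y) => max (μ (tprojX N)) (ν (tprojY N))) f ≤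
          choquet π f :=  by
  classical
  set πs : Finset (X × Y) → ℝ := fun N => max (μ (tprojX N)) (ν (tprojY N)) with hπs
  have hμ0 := hμ.1.1
  have hν0 := hν.1.1
  -- tproj products are subsets
  have hsubX : ∀ N : Finset (X × Y), tprojX N ×ˢ Finset.univ ⊆ N := by
    intro N p hp
    rw [Finset.mem_product] at hp
    have := (Finset.mem_filter.1 hp.1).2
    exact (Prod.mk.eta (p := p)) ▸ this p.2
  have hsubY : ∀ N : Finset (X × Y), Finset.univ ×ˢ tprojY N ⊆ N := by
    intro N p hp
    rw [Finset.mem_product] at hp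
    have := (Finset.mem_filter.1 hp.2).2
    exact (Prod.mk.eta (p := p)) ▸ this p.1
  have hmem : InPiCh μ ν πs := by
    refine ⟨⟨?_, ?_⟩, ?_, ?_⟩
    · have h1 : tprojX (∅ : Finset (X × Y)) = ∅ := by
        apply Finset.filter_false_of_mem
        intro x _ hall
        exact absurd (hall (Classical.arbitrary Y)) (Finset.notMem_empty _)
      have h2 : tprojY (∅ : Finset (X × Y)) = ∅ := by
        apply Finset.filter_false_of_mem
        intro y _ hall
        exact absurd (hall (Classical.arbitrary X)) (Finset.notMem_empty _)
      simp [πs, h1, h2, hμ0, hν0]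
    · intro A B hAB
      apply max_le_max
      · apply hμ.1.2
        intro x hx
        simp only [tprojX, Finset.mem_filter, Finset.mem_univ, true_and] at *
        exact fun y => hAB (hx y)
      · apply hν.1.2
        intro y hy
        simp only [tprojY, Finset.mem_filter, Finset.mem_univ, true_and] at *
        exact fun x => hAB (hy x)
    · intro A
      have h1 : tprojX (A ×ˢ (Finset.univ : Finset Y)) = A := by
        ext x
        simp only [tprojX, Finset.mem_filter, Finset.mem_univ, true_and, Finset.mem_product,
          and_true]
        exact ⟨fun h => h (Classical.arbitrary Y), fun h _ => h⟩
      rw [hπs]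
      by_cases hA : A = Finset.univ
      · subst hA
        have h2 : tprojY ((Finset.univ : Finset X) ×ˢ (Finset.univ : Finset Y)) = Finset.univ := by
          apply Finset.filter_true_of_mem
          intro y _ x
          simp
        simp only [h1, h2, hν.2, hμ.2, max_self]
      · have h2 : tprojY (A ×ˢ (Finset.univ : Finset Y)) = ∅ := by
          obtain ⟨x, hx⟩ : ∃ x, x ∉ A := by
            by_contra hc
            push_neg at hc
            exact hA (Finset.eq_univ_iff_forall.2 hc)
          apply Finset.filter_false_of_mem
          intro y _ hall
          exact hx (Finset.mem_product.1 (hall x)).1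
        have : ν ∅ ≤ μ A := hν0 ▸ (hμ0 ▸ hμ.1.2 ∅ A (Finset.empty_subset _))
        simp only [h1, h2]
        exact max_eq_left this
    · intro B
      have h1 : tprojY ((Finset.univ : Finset X) ×ˢ B) = B := by
        ext y
        simp only [tprojY, Finset.mem_filter, Finset.mem_univ, true_and, Finset.mem_product,
          true_and]
        exact ⟨fun h => h (Classical.arbitrary X), fun h _ => h⟩
      rw [hπs]
      by_cases hB : B = Finset.univ
      · subst hB
        have h2 : tprojX ((Finset.univ : Finset X) ×ˢ (Finset.univ : Finset Y)) = Finset.univ := by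
          apply Finset.filter_true_of_mem
          intro x _ y
          simp
        simp only [h1, h2, hν.2, hμ.2, max_self]
      · have h2 : tprojX ((Finset.univ : Finset X) ×ˢ B) = ∅ := by
          obtain ⟨y, hy⟩ : ∃ y, y ∉ B := by
            by_contra hc
            push_neg at hc
            exact hB (Finset.eq_univ_iff_forall.2 hc)
          apply Finset.filter_false_of_mem
          intro x _ hall
          exact hy (Finset.mem_product.1 (hall y)).2
        have : μ ∅ ≤ ν B := hμ0 ▸ (hν0 ▸ hν.1.2 ∅ B (Finset.empty_subset _))
        simp only [h1, h2]
        exact max_eq_right this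
  refine ⟨hmem, ?_⟩
  intro π hπ
  have huniv : (Finset.univ : Finset (X × Y)) = Finset.univ ×ˢ Finset.univ := by
    ext p; simp [Finset.mem_product]
  have hπnorm : IsNormalizedCapacity π :=
    ⟨hπ.1, by rw [huniv, hπ.2.1 Finset.univ, hμ.2]⟩
  have hπsnorm : IsNormalizedCapacity πs :=
    ⟨hmem.1, by rw [huniv, hmem.2.1 Finset.univ, hμ.2]⟩
  apply choquet_mono hπsnorm hπnorm
  intro N
  apply max_le
  · rw [← hπ.2.1 (tprojX N)]
    exact hπ.1.2 _ _ (hsubX N)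
  · rw [← hπ.2.2 (tprojY N)]
    exact hπ.1.2 _ _ (hsubY N)
end

section
/- Let X and Y be finite sets with |X| ≥ 2 and |Y| ≥ 2, and let μ and ν be normalized capacities on X and Y respectively. Then the core of π^* is empty, where π^*(N) = min(μ(N_X), ν(N_Y)) for N ⊆ X × Y. -/
open Finset MeasureTheory

/-- if `|X| ≥ 2` and `|Y| ≥ 2`, then the core of
`π^*(N) = min(μ(N_X), ν(N_Y))` is empty. -/
theorem core_piUpper_empty {X Y : Type*} [Fintype X] [Fintype Y]
    [DecidableEq X] [DecidableEq Y]
    (hX : 2 ≤ Fintype.card X) (hY : 2 ≤ Fintype.card Y)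
    (μ : Finset X → ℝ) (ν : Finset Y → ℝ)
    (hμ : IsNormalizedCapacity μ) (hν : IsNormalizedCapacity ν) :
    ¬ ∃ w : X × Y → ℝ,
        InCore (fun N : Finset (X × Y) => min (μ (projX N)) (ν (projY N))) w := by
  rintro ⟨w, hdom, hsum⟩
  have hXne : Nonempty X := Fintype.card_pos_iff.mp (by omega)
  have hYne : Nonempty Y := Fintype.card_pos_iff.mp (by omega)
  have hprojXuniv : projX (Finset.univ : Finset (X × Y)) = Finset.univ := by
    ext x; simp [projX]
  have hprojYuniv : projY (Finset.univ : Finset (X × Y)) = Finset.univ := by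
    ext y; simp [projY]
  have htot : (∑ z : X × Y, w z) = 1 := by
    rw [hsum]; simp only [hprojXuniv, hprojYuniv, hμ.2, hν.2]; simp
  have hnonpos : ∀ p : X × Y, w p ≤ 0 := by
    intro p
    have h1 := hdom (Finset.univ.erase p)
    have hpx : projX (Finset.univ.erase p) = Finset.univ := by
      ext x
      simp only [projX, Finset.mem_image, Finset.mem_erase, Finset.mem_univ, iff_true,
        and_true]
      obtain ⟨y, hy⟩ := Fintype.exists_ne_of_one_lt_card (by omega) p.2
      exact ⟨(x, y), by simp [Prod.ext_iff, hy], rfl⟩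
    have hpy : projY (Finset.univ.erase p) = Finset.univ := by
      ext y
      simp only [projY, Finset.mem_image, Finset.mem_erase, Finset.mem_univ, iff_true,
        and_true]
      obtain ⟨x, hx⟩ := Fintype.exists_ne_of_one_lt_card (by omega) p.1
      exact ⟨(x, y), by simp [Prod.ext_iff, hx], rfl⟩
    simp only [hpx, hpy, hμ.2, hν.2,
      Finset.sum_erase_eq_sub (Finset.mem_univ p), htot] at h1
    simp at h1
    linarith
  have : (∑ z : X × Y, w z) ≤ 0 :=
    Finset.sum_nonpos (fun p _ => hnonpos p)
  linarith
end

section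
/- Let X and Y be nonempty finite sets and let μ and ν be normalized capacities on X and Y respectively, with π_*(N) = max(μ(Ñ_X), ν(Ñ_Y)) and π^*(N) = min(μ(N_X), ν(N_Y)). Then: (1) if C(π^*) is nonempty, then C(π) is nonempty for every π ∈ Π_Ch(μ,ν); and (2) if C(π_*) is empty, then C(π) is empty for every π ∈ Π_Ch(μ,ν). -/
open Finset MeasureTheory

/-- (1) if `C(π^*)` is nonempty then every `π ∈ Π_Ch(μ, ν)` has nonempty core;
(2) if `C(π_*)` is empty then every `π ∈ Π_Ch(μ, ν)` has empty core. -/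
theorem core_piUpper_piLower_transfer {X Y : Type*} [Fintype X] [Fintype Y]
    [Nonempty X] [Nonempty Y] [DecidableEq X] [DecidableEq Y]
    (μ : Finset X → ℝ) (ν : Finset Y → ℝ)
    (hμ : IsNormalizedCapacity μ) (hν : IsNormalizedCapacity ν) :
    ((∃ w : X × Y → ℝ,
        InCore (fun N : Finset (X × Y) => min (μ (projX N)) (ν (projY N))) w) →
      ∀ π : Finset (X × Y) → ℝ, InPiCh μ ν π → ∃ w : X × Y → ℝ, InCore π w) ∧
    ((¬ ∃ w : X × Y → ℝ,
        InCore (fun N : Finset (X × Y) => max (μ (tprojX N)) (ν (tprojY N))) w) →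
      ∀ π : Finset (X × Y) → ℝ, InPiCh μ ν π → ¬ ∃ w : X × Y → ℝ, InCore π w) := by
  obtain ⟨⟨hμ0, hμmono⟩, hμ1⟩ := hμ
  obtain ⟨⟨hν0, hνmono⟩, hν1⟩ := hν
  have huniv : ∀ π : Finset (X × Y) → ℝ, InPiCh μ ν π → π Finset.univ = 1 := by
    intro π ⟨_, hA, _⟩
    have := hA Finset.univ
    rwa [Finset.univ_product_univ, hμ1] at this
  have hupper : ∀ π : Finset (X × Y) → ℝ, InPiCh μ ν π → ∀ N : Finset (X × Y),
      π N ≤ min (μ (projX N)) (ν (projY N)) := by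
    intro π ⟨⟨_, hmono⟩, hA, hB⟩ N
    refine le_min ?_ ?_
    · rw [← hA (projX N)]
      refine hmono _ _ (fun p hp => ?_)
      simp only [Finset.mem_product, Finset.mem_univ, and_true]
      exact Finset.mem_image_of_mem Prod.fst hp
    · rw [← hB (projY N)]
      refine hmono _ _ (fun p hp => ?_)
      simp only [Finset.mem_product, Finset.mem_univ, true_and]
      exact Finset.mem_image_of_mem Prod.snd hp
  have hlower : ∀ π : Finset (X × Y) → ℝ, InPiCh μ ν π → ∀ N : Finset (X × Y),
      max (μ (tprojX N)) (ν (tprojY N)) ≤ π N := by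
    intro π ⟨⟨_, hmono⟩, hA, hB⟩ N
    refine max_le ?_ ?_
    · rw [← hA (tprojX N)]
      refine hmono _ _ (fun p hp => ?_)
      simp only [Finset.mem_product, Finset.mem_univ, and_true, tprojX,
        Finset.mem_filter, true_and] at hp
      simpa using hp p.2
    · rw [← hB (tprojY N)]
      refine hmono _ _ (fun p hp => ?_)
      simp only [Finset.mem_product, Finset.mem_univ, true_and, tprojY,
        Finset.mem_filter, true_and] at hp
      simpa using hp p.1
  constructor
  · rintro ⟨w, hw1, hw2⟩ π hπ
    refine ⟨w, fun N => le_trans (hupper π hπ N) (hw1 N), ?_⟩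
    rw [hw2, huniv π hπ]
    have hx : projX (Finset.univ : Finset (X × Y)) = Finset.univ :=
      Finset.image_univ_of_surjective Prod.fst_surjective
    have hy : projY (Finset.univ : Finset (X × Y)) = Finset.univ :=
      Finset.image_univ_of_surjective Prod.snd_surjective
    simp [hx, hy, hμ1, hν1]
  · rintro hne π hπ ⟨w, hw1, hw2⟩
    refine hne ⟨w, fun N => le_trans (hlower π hπ N) (hw1 N), ?_⟩
    rw [hw2, huniv π hπ]
    have hx : tprojX (Finset.univ : Finset (X × Y)) = Finset.univ := by
      ext x; simp [tprojX]
    have hy : tprojY (Finset.univ : Finset (X × Y)) = Finset.univ := by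
      ext y; simp [tprojY]
    simp [hx, hy, hμ1, hν1]
end

section
/- Let X and Y be nonempty finite sets and let μ and ν be normalized capacities on X and Y respectively, with π_*(N) = max(μ(Ñ_X), ν(Ñ_Y)). Then C(π_*) is nonempty if and only if both C(μ) and C(ν) are nonempty. -/
open Finset MeasureTheory

/-- `C(π_*)` is nonempty if and only if both `C(μ)` and `C(ν)` are nonempty. -/
theorem core_piLower_nonempty_iff {X Y : Type*} [Fintype X] [Fintype Y]
    [Nonempty X] [Nonempty Y] [DecidableEq X] [DecidableEq Y]
    (μ : Finset X → ℝ) (ν : Finset Y → ℝ)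
    (hμ : IsNormalizedCapacity μ) (hν : IsNormalizedCapacity ν) :
    (∃ w : X × Y → ℝ,
        InCore (fun N : Finset (X × Y) => max (μ (tprojX N)) (ν (tprojY N))) w) ↔
      ((∃ u : X → ℝ, InCore μ u) ∧ (∃ v : Y → ℝ, InCore ν v)) := by

  obtain ⟨⟨hμ0, hμmono⟩, hμ1⟩ := hμ
  obtain ⟨⟨hν0, hνmono⟩, hν1⟩ := hν
  have htX : tprojX (Finset.univ : Finset (X × Y)) = Finset.univ := by
    ext x; simp [tprojX]
  have htY : tprojY (Finset.univ : Finset (X × Y)) = Finset.univ := by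
    ext y; simp [tprojY]
  constructor
  · rintro ⟨w, hw1, hw2⟩
    simp only [htX, htY, hμ1, hν1, max_self] at hw2
    constructor
    · refine ⟨fun x => ∑ y : Y, w (x, y), fun A => ?_, ?_⟩
      · have h := hw1 (A ×ˢ Finset.univ)
        have hproj : tprojX (A ×ˢ (Finset.univ : Finset Y)) = A := by
          ext x; simp [tprojX]
        simp only [hproj] at h
        calc μ A ≤ max (μ A) (ν (tprojY (A ×ˢ Finset.univ))) := le_max_left _ _
          _ ≤ ∑ z ∈ A ×ˢ Finset.univ, w z := h
          _ = ∑ x ∈ A, ∑ y : Y, w (x, y) := Finset.sum_product _ _ _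
      · rw [hμ1, ← hw2, Fintype.sum_prod_type]
    · refine ⟨fun y => ∑ x : X, w (x, y), fun B => ?_, ?_⟩
      · have h := hw1 (Finset.univ ×ˢ B)
        have hproj : tprojY ((Finset.univ : Finset X) ×ˢ B) = B := by
          ext y; simp [tprojY]
        simp only [hproj] at h
        calc ν B ≤ max (μ (tprojX (Finset.univ ×ˢ B))) (ν B) := le_max_right _ _
          _ ≤ ∑ z ∈ Finset.univ ×ˢ B, w z := h
          _ = ∑ y ∈ B, ∑ x : X, w (x, y) := by
              rw [Finset.sum_product]
              exact Finset.sum_comm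
      · rw [hν1, ← hw2, Fintype.sum_prod_type]
        exact Finset.sum_comm
  · rintro ⟨⟨u, hu1, hu2⟩, ⟨v, hv1, hv2⟩⟩
    rw [hμ1] at hu2
    rw [hν1] at hv2
    have hun : ∀ x, 0 ≤ u x := by
      intro x
      have h1 : (0:ℝ) ≤ μ {x} := hμ0 ▸ hμmono ∅ {x} (Finset.empty_subset _)
      have h2 := hu1 {x}
      simp only [Finset.sum_singleton] at h2
      linarith
    have hvn : ∀ y, 0 ≤ v y := by
      intro y
      have h1 : (0:ℝ) ≤ ν {y} := hν0 ▸ hνmono ∅ {y} (Finset.empty_subset _)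
      have h2 := hv1 {y}
      simp only [Finset.sum_singleton] at h2
      linarith
    refine ⟨fun p => u p.1 * v p.2, fun N => ?_, ?_⟩
    · have hmono : ∀ M : Finset (X × Y), M ⊆ N →
          ∑ p ∈ M, u p.1 * v p.2 ≤ ∑ p ∈ N, u p.1 * v p.2 := by
        intro M hM
        exact Finset.sum_le_sum_of_subset_of_nonneg hM
          (fun p _ _ => mul_nonneg (hun p.1) (hvn p.2))
      refine max_le ?_ ?_
      · have hsub : (tprojX N) ×ˢ (Finset.univ : Finset Y) ⊆ N := by
          intro p hp
          rw [Finset.mem_product] at hp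
          have := hp.1
          simp only [tprojX, Finset.mem_filter] at this
          exact this.2 p.2
        calc μ (tprojX N) ≤ ∑ x ∈ tprojX N, u x := hu1 _
          _ = ∑ p ∈ (tprojX N) ×ˢ (Finset.univ : Finset Y), u p.1 * v p.2 := by
              rw [Finset.sum_product]
              simp [← Finset.mul_sum, hv2]
          _ ≤ _ := hmono _ hsub
      · have hsub : (Finset.univ : Finset X) ×ˢ (tprojY N) ⊆ N := by
          intro p hp
          rw [Finset.mem_product] at hp
          have := hp.2
          simp only [tprojY, Finset.mem_filter] at this
          exact this.2 p.1
        calc ν (tprojY N) ≤ ∑ y ∈ tprojY N, v y := hv1 _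
          _ = ∑ p ∈ (Finset.univ : Finset X) ×ˢ (tprojY N), u p.1 * v p.2 := by
              rw [Finset.sum_product, Finset.sum_comm]
              simp [← Finset.sum_mul, hu2]
          _ ≤ _ := hmono _ hsub
    · simp only [htX, htY, hμ1, hν1, max_self]
      rw [Fintype.sum_prod_type]
      simp [← Finset.mul_sum, hv2, hu2]
end

section
/- Let X and Y be nonempty finite sets and let μ and ν be possibility measures on X and Y respectively. Then the set function π on subsets of X × Y defined by π(∅) = 0 and π(N) = max_{(x,y) ∈ N} μ({x})·ν({y}) for nonempty N is a possibility measure and belongs to Π_Ch(μ,ν). -/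
open Finset MeasureTheory

/-- A possibility measure on a finite set: a normalized capacity with
`γ(A ∪ B) = max(γ(A), γ(B))`. -/
def IsPossibility {Z : Type*} [Fintype Z] [DecidableEq Z] (γ : Finset Z → ℝ) : Prop :=
  IsNormalizedCapacity γ ∧ ∀ A B : Finset Z, γ (A ∪ B) = max (γ A) (γ B)

/-- The product possibility set function: `π(∅) = 0` and
`π(N) = max_{(x,y) ∈ N} μ({x}) · ν({y})` for nonempty `N`. -/
noncomputable def possProd {X Y : Type*} (μ : Finset X → ℝ) (ν : Finset Y → ℝ) :
    Finset (X × Y) → ℝ :=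
  fun N => if h : N.Nonempty then N.sup' h (fun p => μ {p.1} * ν {p.2}) else 0

lemma poss_singleton_nonneg {Z : Type*} [Fintype Z] [DecidableEq Z] {γ : Finset Z → ℝ}
    (hγ : IsPossibility γ) (z : Z) : 0 ≤ γ {z} := by
  have := hγ.1.1.2 ∅ {z} (Finset.empty_subset _)
  simpa [hγ.1.1.1] using this

lemma poss_eq_sup' {Z : Type*} [Fintype Z] [DecidableEq Z] {γ : Finset Z → ℝ}
    (hγ : IsPossibility γ) (A : Finset Z) (h : A.Nonempty) :
    γ A = A.sup' h (fun z => γ {z}) := by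
  induction h using Finset.Nonempty.cons_induction with
  | singleton a => simp
  | cons a s ha hs ih =>
      have hc : (Finset.cons a s ha : Finset Z) = {a} ∪ s := by
        ext z; simp
      rw [Finset.sup'_cons hs, hc, hγ.2 {a} s, ih]

lemma sup'_mul_prod {X Y : Type*} {A : Finset X} {B : Finset Y}
    (hA : A.Nonempty) (hB : B.Nonempty) (f : X → ℝ) (g : Y → ℝ)
    (hf : ∀ x ∈ A, 0 ≤ f x) (hg : ∀ y ∈ B, 0 ≤ g y) :
    (A ×ˢ B).sup' (hA.product hB) (fun p => f p.1 * g p.2)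
      = (A.sup' hA f) * (B.sup' hB g) := by
  apply le_antisymm
  · apply Finset.sup'_le
    intro p hp
    rw [Finset.mem_product] at hp
    have h1 : f p.1 ≤ A.sup' hA f := Finset.le_sup' f hp.1
    have h2 : g p.2 ≤ B.sup' hB g := Finset.le_sup' g hp.2
    exact mul_le_mul h1 h2 (hg _ hp.2) (le_trans (hf _ hp.1) h1)
  · obtain ⟨x, hx, hxe⟩ := Finset.exists_mem_eq_sup' hA f
    obtain ⟨y, hy, hye⟩ := Finset.exists_mem_eq_sup' hB g
    rw [hxe, hye]
    have hxy : (x, y) ∈ A ×ˢ B := Finset.mem_product.mpr ⟨hx, hy⟩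
    exact Finset.le_sup' (fun p => f p.1 * g p.2) hxy

/-- if `μ` and `ν` are possibility measures, then `possProd μ ν` is a
possibility measure belonging to `Π_Ch(μ, ν)`. -/
theorem possProd_possibility_mem_piCh {X Y : Type*} [Fintype X] [Fintype Y]
    [Nonempty X] [Nonempty Y] [DecidableEq X] [DecidableEq Y]
    (μ : Finset X → ℝ) (ν : Finset Y → ℝ)
    (hμ : IsPossibility μ) (hν : IsPossibility ν) :
    IsPossibility (possProd μ ν) ∧ InPiCh μ ν (possProd μ ν) := by
  set f : X × Y → ℝ := fun p => μ {p.1} * ν {p.2} with hf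
  have hf0 : ∀ p : X × Y, 0 ≤ f p := fun p =>
    mul_nonneg (poss_singleton_nonneg hμ _) (poss_singleton_nonneg hν _)
  have hempty : possProd μ ν ∅ = 0 := by simp [possProd]
  have hval : ∀ (N : Finset (X × Y)) (h : N.Nonempty),
      possProd μ ν N = N.sup' h f := by
    intro N h; simp [possProd, h, hf]
  have hnonneg : ∀ N : Finset (X × Y), 0 ≤ possProd μ ν N := by
    intro N
    rcases N.eq_empty_or_nonempty with rfl | h
    · simp [hempty]
    · rw [hval N h]
      obtain ⟨p, hp⟩ := h
      exact le_trans (hf0 p) (Finset.le_sup' f hp)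
  have hmono : ∀ A B : Finset (X × Y), A ⊆ B → possProd μ ν A ≤ possProd μ ν B := by
    intro A B hAB
    rcases A.eq_empty_or_nonempty with rfl | hA
    · rw [hempty]; exact hnonneg B
    · have hB : B.Nonempty := hA.mono hAB
      rw [hval A hA, hval B hB]
      exact Finset.sup'_le hA f fun p hp => Finset.le_sup' f (hAB hp)
  have hcap : IsCapacity (possProd μ ν) := ⟨hempty, hmono⟩
  have hprod : ∀ (A : Finset X) (B : Finset Y) (hA : A.Nonempty) (hB : B.Nonempty),
      possProd μ ν (A ×ˢ B) = μ A * ν B := by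
    intro A B hA hB
    rw [hval _ (hA.product hB), hf,
      sup'_mul_prod hA hB (fun x => μ {x}) (fun y => ν {y})
        (fun x _ => poss_singleton_nonneg hμ x) (fun y _ => poss_singleton_nonneg hν y),
      ← poss_eq_sup' hμ A hA, ← poss_eq_sup' hν B hB]
  have hunivprod : (Finset.univ : Finset (X × Y)) = Finset.univ ×ˢ Finset.univ := by
    simp
  have hnorm : possProd μ ν Finset.univ = 1 := by
    rw [hunivprod, hprod _ _ Finset.univ_nonempty Finset.univ_nonempty,
      hμ.1.2, hν.1.2, one_mul]
  have hmax : ∀ A B : Finset (X × Y),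
      possProd μ ν (A ∪ B) = max (possProd μ ν A) (possProd μ ν B) := by
    intro A B
    rcases A.eq_empty_or_nonempty with rfl | hA
    · rw [hempty, Finset.empty_union, max_eq_right (hnonneg B)]
    rcases B.eq_empty_or_nonempty with rfl | hB
    · rw [hempty, Finset.union_empty, max_eq_left (hnonneg A)]
    rw [hval _ (hA.mono Finset.subset_union_left), hval A hA, hval B hB,
      Finset.sup'_union hA hB f]
  refine ⟨⟨⟨hcap, hnorm⟩, hmax⟩, hcap, ?_, ?_⟩
  · intro A
    rcases A.eq_empty_or_nonempty with rfl | hA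
    · simp [hempty, hμ.1.1.1]
    · rw [hprod _ _ hA Finset.univ_nonempty, hν.1.2, mul_one]
  · intro B
    rcases B.eq_empty_or_nonempty with rfl | hB
    · simp [hempty, hν.1.1.1]
    · rw [hprod _ _ Finset.univ_nonempty hB, hμ.1.2, one_mul]
end

section
/- Let X be a finite set with at least two elements, let μ and ν be two distinct probability measures on X (given by nonnegative weight functions summing to 1, viewed as additive normalized capacities), and let D = {(x,x) : x ∈ X} ⊆ X × X be the diagonal. Then π_*(Dᶜ) = 0, where π_*(N) = max(μ(Ñ_X), ν(Ñ_Y)) for N ⊆ X × X, yet every coupling w ∈ Π_a(μ,ν) satisfies w(Dᶜ) > 0. In particular, since C(π_*) = Π_a(μ,ν), the capacity π_* is not exact: there is a nonempty set S (namely S = Dᶜ) such that no element p of C(π_*) satisfies p(S) = π_*(S). -/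
open Finset MeasureTheory

/-- `w` is a coupling of the weight functions `u` and `v` (membership in `Π_a(u, v)`). -/
def InPiA {X Y : Type*} [Fintype X] [Fintype Y] (u : X → ℝ) (v : Y → ℝ)
    (w : X × Y → ℝ) : Prop :=
  (∀ x : X, (∑ y : Y, w (x, y)) = u x) ∧ (∀ y : Y, (∑ x : X, w (x, y)) = v y)

/-- let `X` have at least two elements, let `m ≠ n` be probability weight
functions on `X` inducing additive capacities `μ`, `ν`, and let `D` be the diagonal of
`X × X`. Then `π_*(Dᶜ) = 0`, every nonnegative coupling `w ∈ Π_a(m, n)` has `w(Dᶜ) > 0`,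
and `π_*` is not exact: there is a nonempty set `S` (namely `S = Dᶜ`) such that no core
element `p` of `π_*` satisfies `p(S) = π_*(S)`. -/
theorem piLower_not_exact {X : Type*} [Fintype X] [DecidableEq X]
    (hX : 2 ≤ Fintype.card X)
    (m n : X → ℝ) (hm0 : ∀ x, 0 ≤ m x) (hn0 : ∀ x, 0 ≤ n x)
    (hm1 : (∑ x : X, m x) = 1) (hn1 : (∑ x : X, n x) = 1) (hmn : m ≠ n)
    (μ ν : Finset X → ℝ)
    (hμ : ∀ A : Finset X, μ A = ∑ x ∈ A, m x)
    (hν : ∀ A : Finset X, ν A = ∑ x ∈ A, n x)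
    (D : Finset (X × X)) (hD : D = Finset.univ.filter (fun p => p.1 = p.2)) :
    max (μ (tprojX Dᶜ)) (ν (tprojY Dᶜ)) = 0 ∧
      (∀ w : X × X → ℝ, (∀ z, 0 ≤ w z) → InPiA m n w → 0 < ∑ z ∈ Dᶜ, w z) ∧
      (∃ S : Finset (X × X), S.Nonempty ∧
        ∀ p : X × X → ℝ,
          InCore (fun N : Finset (X × X) => max (μ (tprojX N)) (ν (tprojY N))) p →
            (∑ z ∈ S, p z) ≠ max (μ (tprojX S)) (ν (tprojY S))) := by
  have hXne : Nonempty X := Fintype.card_pos_iff.mp (by omega)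
  have hDc : ∀ z : X × X, z ∈ Dᶜ ↔ z.1 ≠ z.2 := by
    intro z; simp [hD]
  have htX : tprojX Dᶜ = (∅ : Finset X) := by
    ext x
    simp only [tprojX, Finset.mem_filter, Finset.mem_univ, true_and,
      Finset.notMem_empty, iff_false, not_forall]
    exact ⟨x, fun h => (hDc (x, x)).mp h rfl⟩
  have htY : tprojY Dᶜ = (∅ : Finset X) := by
    ext y
    simp only [tprojY, Finset.mem_filter, Finset.mem_univ, true_and,
      Finset.notMem_empty, iff_false, not_forall]
    exact ⟨y, fun h => (hDc (y, y)).mp h rfl⟩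
  have h1 : max (μ (tprojX Dᶜ)) (ν (tprojY Dᶜ)) = 0 := by
    rw [htX, htY, hμ, hν]; simp
  have h2 : ∀ w : X × X → ℝ, (∀ z, 0 ≤ w z) → InPiA m n w → 0 < ∑ z ∈ Dᶜ, w z := by
    rintro w hw0 ⟨hwm, hwn⟩
    by_contra h
    push_neg at h
    have hsum0 : ∑ z ∈ Dᶜ, w z = 0 :=
      le_antisymm h (Finset.sum_nonneg fun z _ => hw0 z)
    have hz0 : ∀ z ∈ Dᶜ, w z = 0 :=
      (Finset.sum_eq_zero_iff_of_nonneg (fun z _ => hw0 z)).mp hsum0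
    apply hmn
    funext x
    have hrow : ∑ y : X, w (x, y) = w (x, x) := by
      apply Fintype.sum_eq_single
      intro y hy
      exact hz0 (x, y) ((hDc (x, y)).mpr fun e => hy e.symm)
    have hcol : ∑ x' : X, w (x', x) = w (x, x) := by
      apply Fintype.sum_eq_single
      intro y hy
      exact hz0 (y, x) ((hDc (y, x)).mpr hy)
    rw [← hwm x, ← hwn x, hrow, hcol]
  refine ⟨h1, h2, Dᶜ, ?_, ?_⟩
  · obtain ⟨x, y, hxy⟩ := Fintype.exists_pair_of_one_lt_card hX
    exact ⟨(x, y), (hDc (x, y)).mpr hxy⟩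
  · rintro p ⟨hp1, hp2⟩
    have hp0 : ∀ z : X × X, 0 ≤ p z := by
      intro z
      have hnn : (0 : ℝ) ≤ max (μ (tprojX {z})) (ν (tprojY {z})) :=
        le_max_of_le_left (by rw [hμ]; exact Finset.sum_nonneg fun x _ => hm0 x)
      calc (0 : ℝ) ≤ _ := hnn
        _ ≤ ∑ w ∈ {z}, p w := hp1 {z}
        _ = p z := Finset.sum_singleton _ _
    have htU : tprojX (Finset.univ : Finset (X × X)) = Finset.univ := by
      ext x; simp [tprojX]
    have htU' : tprojY (Finset.univ : Finset (X × X)) = Finset.univ := by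
      ext x; simp [tprojY]
    have hsum1 : ∑ z : X × X, p z = 1 := by
      rw [hp2]; beta_reduce; rw [htU, htU', hμ, hν, hm1, hn1]; simp
    have hrowset : ∀ x : X, tprojX (({x} : Finset X) ×ˢ (Finset.univ : Finset X)) = {x} := by
      intro x; ext x'
      simp only [tprojX, Finset.mem_filter, Finset.mem_univ, true_and,
        Finset.mem_product, Finset.mem_singleton, and_true]
      exact ⟨fun h => h (Classical.arbitrary X), fun h _ => h⟩
    have hcolset : ∀ y : X, tprojY ((Finset.univ : Finset X) ×ˢ ({y} : Finset X)) = {y} := by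
      intro y; ext y'
      simp only [tprojY, Finset.mem_filter, Finset.mem_univ, true_and,
        Finset.mem_product, Finset.mem_singleton]
      exact ⟨fun h => h (Classical.arbitrary X), fun h _ => h⟩
    have hrowle : ∀ x : X, m x ≤ ∑ y : X, p (x, y) := by
      intro x
      calc m x = μ {x} := by rw [hμ, Finset.sum_singleton]
        _ ≤ max (μ (tprojX (({x} : Finset X) ×ˢ (Finset.univ : Finset X))))
              (ν (tprojY (({x} : Finset X) ×ˢ (Finset.univ : Finset X)))) := by
            rw [hrowset x]; exact le_max_left _ _
        _ ≤ ∑ z ∈ ({x} : Finset X) ×ˢ (Finset.univ : Finset X), p z := hp1 _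
        _ = ∑ y : X, p (x, y) := by rw [Finset.sum_product, Finset.sum_singleton]
    have hcolle : ∀ y : X, n y ≤ ∑ x : X, p (x, y) := by
      intro y
      calc n y = ν {y} := by rw [hν, Finset.sum_singleton]
        _ ≤ max (μ (tprojX ((Finset.univ : Finset X) ×ˢ ({y} : Finset X))))
              (ν (tprojY ((Finset.univ : Finset X) ×ˢ ({y} : Finset X)))) := by
            rw [hcolset y]; exact le_max_right _ _
        _ ≤ ∑ z ∈ (Finset.univ : Finset X) ×ˢ ({y} : Finset X), p z := hp1 _
        _ = ∑ x : X, p (x, y) := by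
            rw [Finset.sum_product]
            simp [Finset.sum_singleton]
    have hrows : ∀ x : X, ∑ y : X, p (x, y) = m x := by
      have hkey : ∑ x : X, ((∑ y : X, p (x, y)) - m x) = 0 := by
        rw [Finset.sum_sub_distrib, hm1, ← Fintype.sum_prod_type, hsum1, sub_self]
      intro x
      have := (Finset.sum_eq_zero_iff_of_nonneg
        (fun x _ => sub_nonneg.mpr (hrowle x))).mp hkey x (Finset.mem_univ x)
      linarith
    have hcols : ∀ y : X, ∑ x : X, p (x, y) = n y := by
      have hswap : ∑ y : X, ∑ x : X, p (x, y) = 1 := by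
        rw [← hsum1, Fintype.sum_prod_type]; exact Finset.sum_comm
      have hkey : ∑ y : X, ((∑ x : X, p (x, y)) - n y) = 0 := by
        rw [Finset.sum_sub_distrib, hn1, hswap, sub_self]
      intro y
      have := (Finset.sum_eq_zero_iff_of_nonneg
        (fun y _ => sub_nonneg.mpr (hcolle y))).mp hkey y (Finset.mem_univ y)
      linarith
    have hpos := h2 p hp0 ⟨hrows, hcols⟩
    rw [h1]
    exact ne_of_gt hpos
end
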